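/- For every constant 0 < c < 1, there exist two convex 1-Lipschitz functions f(·; 1) and f(·; −1) on ℝ² (namely f(w; z) = max{0, −v_zᵀw + c‖v_z‖²} with v₁ = −(1/4, 3/4) and v₋₁ = −(0, 3/4)) such that, setting v₁ = −∇f(0; 1) and v₋₁ = −∇f(0; −1), for every η with c < (1/2)η < 1 one has ‖v₁ − v₋₁‖ ≥ 1/4 and f(ηv₁; z) = f(ηv₋₁; z) for each z ∈ {−1, 1}. -/

import Mathlib

/- STATEMENT 11: the auxiliary two-function construction (Lemma "r2").
   f(w; z) = max{0, −v_zᵀw + c‖v_z‖²} with v₁ = −(1/4, 3/4) and v₋₁ = −(0, 3/4);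
   `true` encodes z = 1 and `false` encodes z = −1. -/

open MeasureTheory

noncomputable section

abbrev Euc (d : ℕ) := EuclideanSpace ℝ (Fin d)

/-- The point `(x, y) ∈ ℝ²`. -/
def toE2 (x y : ℝ) : Euc 2 := (WithLp.equiv 2 (Fin 2 → ℝ)).symm ![x, y]

/-- The vectors `v₁ = −(1/4, 3/4)` (for `z = 1`, i.e. `true`) and `v₋₁ = −(0, 3/4)`
(for `z = −1`, i.e. `false`). -/
def vvec : Bool → Euc 2
  | true => toE2 (-(1 / 4)) (-(3 / 4))
  | false => toE2 0 (-(3 / 4))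

/-- `f(w; z) = max{0, −v_zᵀ w + c‖v_z‖²}`. -/
def fAux (c : ℝ) (z : Bool) (w : Euc 2) : ℝ :=
  max 0 (-(inner ℝ (vvec z) w : ℝ) + c * ‖vvec z‖ ^ 2)

lemma inner_toE2 (a b x y : ℝ) :
    (inner ℝ (toE2 a b) (toE2 x y) : ℝ) = a * x + b * y := by
  simp [toE2, PiLp.inner_apply, Fin.sum_univ_two, RCLike.inner_apply]; ring

lemma norm_sq_true : ‖vvec true‖ ^ 2 = 5 / 8 := by
  rw [← real_inner_self_eq_norm_sq]
  show (inner ℝ (toE2 (-(1/4)) (-(3/4))) (toE2 (-(1/4)) (-(3/4))) : ℝ) = 5/8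
  rw [inner_toE2]; norm_num

lemma norm_sq_false : ‖vvec false‖ ^ 2 = 9 / 16 := by
  rw [← real_inner_self_eq_norm_sq]
  show (inner ℝ (toE2 0 (-(3/4))) (toE2 0 (-(3/4))) : ℝ) = 9/16
  rw [inner_toE2]; norm_num

lemma norm_vvec_le_one (z : Bool) : ‖vvec z‖ ≤ 1 := by
  have h := norm_nonneg (vvec z)
  cases z
  · have := norm_sq_false; nlinarith
  · have := norm_sq_true; nlinarith

lemma hasGradientAux (c : ℝ) (hc0 : 0 < c) (z : Bool) :
    HasGradientAt (fAux c z) (-(vvec z)) 0 := by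
  set v := vvec z
  set g : Euc 2 → ℝ := fun w => -(inner ℝ v w : ℝ) + c * ‖v‖ ^ 2 with hg
  have hv : (0 : ℝ) < ‖v‖ ^ 2 := by
    cases z
    · rw [show v = vvec false from rfl, norm_sq_false]; norm_num
    · rw [show v = vvec true from rfl, norm_sq_true]; norm_num
  have hgrad : HasGradientAt g (-v) 0 := by
    rw [hasGradientAt_iff_hasFDerivAt]
    have h1 : HasFDerivAt g (-(innerSL ℝ v)) 0 := by
      simpa [hg] using ((innerSL ℝ v).hasFDerivAt (x := (0 : Euc 2))).neg.add_const
        (c * ‖v‖ ^ 2)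
    refine h1.congr_fderiv ?_
    ext w
    simp [InnerProductSpace.toDual_apply_apply, inner_neg_left]
  have heq : fAux c z =ᶠ[nhds (0 : Euc 2)] g := by
    have hcont : Continuous g := by
      exact ((innerSL ℝ v).continuous.neg.add continuous_const)
    have hopen : IsOpen {w : Euc 2 | 0 < g w} := isOpen_lt continuous_const hcont
    have hmem : (0 : Euc 2) ∈ {w : Euc 2 | 0 < g w} := by
      simp only [Set.mem_setOf_eq, hg, inner_zero_right]
      positivity
    filter_upwards [hopen.mem_nhds hmem] with w hw
    exact max_eq_right hw.le
  exact hgrad.congr_of_eventuallyEq heq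

lemma grad_eq (c : ℝ) (hc0 : 0 < c) (z : Bool) :
    -(gradient (fAux c z) 0) = vvec z := by
  rw [(hasGradientAux c hc0 z).gradient, neg_neg]

theorem stmt11 (c : ℝ) (hc0 : 0 < c) (hc1 : c < 1) :
    (∀ z : Bool, ConvexOn ℝ Set.univ (fAux c z) ∧ LipschitzWith 1 (fAux c z)) ∧
    (-(gradient (fAux c true) 0) = vvec true ∧
      -(gradient (fAux c false) 0) = vvec false) ∧
    ‖(-(gradient (fAux c true) 0)) - (-(gradient (fAux c false) 0))‖ ≥ 1 / 4 ∧
    ∀ η : ℝ, c < (1 / 2) * η → (1 / 2) * η < 1 →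
      ∀ z : Bool,
        fAux c z (η • (-(gradient (fAux c true) 0))) =
          fAux c z (η • (-(gradient (fAux c false) 0))) := by
  have hT := grad_eq c hc0 true
  have hF := grad_eq c hc0 false
  refine ⟨?_, ⟨hT, hF⟩, ?_, ?_⟩
  · intro z
    constructor
    · have haff : ConvexOn ℝ Set.univ
          (fun w : Euc 2 => -(inner ℝ (vvec z) w : ℝ) + c * ‖vvec z‖ ^ 2) := by
        refine ⟨convex_univ, fun x _ y _ a b ha hb hab => le_of_eq ?_⟩
        simp only [inner_add_right, inner_smul_right, smul_eq_mul]
        linear_combination (-(c * ‖vvec z‖ ^ 2)) * hab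
      have h0 : ConvexOn ℝ Set.univ (fun _ : Euc 2 => (0 : ℝ)) := convexOn_const 0 convex_univ
      exact h0.sup haff
    · refine LipschitzWith.of_dist_le_mul fun w w' => ?_
      have h1 : dist (fAux c z w) (fAux c z w') ≤
          |(-(inner ℝ (vvec z) w : ℝ) + c * ‖vvec z‖ ^ 2) -
            (-(inner ℝ (vvec z) w' : ℝ) + c * ‖vvec z‖ ^ 2)| := by
        rw [Real.dist_eq, fAux, fAux, max_comm 0 _, max_comm 0 _]
        exact abs_max_sub_max_le_abs _ _ _
      have h2 : (-(inner ℝ (vvec z) w : ℝ) + c * ‖vvec z‖ ^ 2) -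
            (-(inner ℝ (vvec z) w' : ℝ) + c * ‖vvec z‖ ^ 2) = inner ℝ (vvec z) (w' - w) := by
        rw [inner_sub_right]; ring
      rw [h2] at h1
      have h3 := abs_real_inner_le_norm (vvec z) (w' - w)
      have h4 : ‖w' - w‖ = dist w w' := by rw [dist_comm, dist_eq_norm]
      have h5 := norm_vvec_le_one z
      have h6 : ‖vvec z‖ * ‖w' - w‖ ≤ 1 * dist w w' := by
        rw [h4]; exact mul_le_mul_of_nonneg_right h5 dist_nonneg |>.trans (by rw [one_mul])
      calc dist (fAux c z w) (fAux c z w') ≤ _ := h1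
        _ ≤ ‖vvec z‖ * ‖w' - w‖ := h3
        _ ≤ (1 : NNReal) * dist w w' := by simpa using h6
  · rw [hT, hF]
    have hd : vvec true - vvec false = toE2 (-(1/4)) 0 := by
      show toE2 (-(1/4)) (-(3/4)) - toE2 0 (-(3/4)) = toE2 (-(1/4)) 0
      simp only [toE2]
      ext i
      fin_cases i <;> simp [WithLp.equiv_symm_apply]
    rw [hd]
    have hsq : ‖toE2 (-(1/4)) (0:ℝ)‖ ^ 2 = 1/16 := by
      rw [← real_inner_self_eq_norm_sq, inner_toE2]; norm_num
    have h0 := norm_nonneg (toE2 (-(1/4)) (0:ℝ))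
    nlinarith
  · intro η hη1 hη2 z
    rw [hT, hF]
    have hηc : 2 * c < η := by linarith
    have key : ∀ z' : Bool, -(inner ℝ (vvec z) (η • vvec z') : ℝ) + c * ‖vvec z‖ ^ 2 ≤ 0 := by
      intro z'
      rw [inner_smul_right]
      cases z <;> cases z'
      · rw [norm_sq_false]
        have : (inner ℝ (vvec false) (vvec false) : ℝ) = 9/16 := by
          rw [real_inner_self_eq_norm_sq, norm_sq_false]
        rw [this]; nlinarith
      · rw [norm_sq_false]
        have : (inner ℝ (vvec false) (vvec true) : ℝ) = 9/16 := by
          show (inner ℝ (toE2 0 (-(3/4))) (toE2 (-(1/4)) (-(3/4))) : ℝ) = 9/16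
          rw [inner_toE2]; norm_num
        rw [this]; nlinarith
      · rw [norm_sq_true]
        have : (inner ℝ (vvec true) (vvec false) : ℝ) = 9/16 := by
          show (inner ℝ (toE2 (-(1/4)) (-(3/4))) (toE2 0 (-(3/4))) : ℝ) = 9/16
          rw [inner_toE2]; norm_num
        rw [this]; nlinarith
      · rw [norm_sq_true]
        have : (inner ℝ (vvec true) (vvec true) : ℝ) = 5/8 := by
          rw [real_inner_self_eq_norm_sq, norm_sq_true]
        rw [this]; nlinarith
    show max 0 _ = max 0 _
    rw [max_eq_left (key true), max_eq_left (key false)]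

end
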